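/- Let X be a barrelled normed space, Y a Banach space containing X with a second (possibly stronger) norm structure, and φ a closed nonnegative sesquilinear form defined everywhere on X × X. Then φ is bounded: there exists γ ≥ 0 with φ(c, c) ≤ γ²‖c‖² for all c ∈ X. (In the paper: the identity map j : 𝔄 ⊗_n 𝔅 → completion of 𝔄 ⊗ 𝔅 under ‖c‖_{φ_Ω} = √(‖c‖_n̄² + φ_Ω(c, c)) is closed, hence continuous by the closed graph theorem for maps from barrelled spaces to Pták spaces, which yields φ_Ω(c, c) ≤ γ²‖c‖_n̄².) -/

import Mathlib

open scoped ComplexOrder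
open Filter

section Aux

variable {X : Type*} [NormedAddCommGroup X] [NormedSpace ℂ X]

/-- Conjugate symmetry of a nonnegative sesquilinear form. -/
theorem stmt17.conj_symm
    (φ : X → X → ℂ)
    (haddl : ∀ a a' b, φ (a + a') b = φ a b + φ a' b)
    (haddr : ∀ a b b', φ a (b + b') = φ a b + φ a b')
    (hsmull : ∀ (z : ℂ) a b, φ (z • a) b = starRingEnd ℂ z * φ a b)
    (hsmulr : ∀ (z : ℂ) a b, φ a (z • b) = z * φ a b)
    (hpos : ∀ c, 0 ≤ φ c c) :
    ∀ x y, (starRingEnd ℂ) (φ y x) = φ x y := by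
  have him : ∀ c, (φ c c).im = 0 := by
    intro c
    have := (Complex.le_def.mp (hpos c)).2
    simpa using this.symm
  intro x y
  have e1 : φ (x + y) (x + y) = φ x x + φ x y + φ y x + φ y y := by
    rw [haddl, haddr, haddr]; ring
  have h1 : (φ x y).im + (φ y x).im = 0 := by
    have := him (x + y)
    rw [e1] at this
    simp only [Complex.add_im, him x, him y] at this
    linarith
  have e2 : φ (x + Complex.I • y) (x + Complex.I • y)
      = φ x x + Complex.I * φ x y + (starRingEnd ℂ Complex.I) * φ y x
        + (starRingEnd ℂ Complex.I) * (Complex.I * φ y y) := by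
    rw [haddl, haddr, haddr, hsmulr, hsmull, hsmull, hsmulr]; ring
  have h2 : (φ x y).re - (φ y x).re = 0 := by
    have := him (x + Complex.I • y)
    rw [e2] at this
    simp only [Complex.add_im, Complex.mul_im, Complex.conj_I, Complex.I_re, Complex.I_im,
      Complex.neg_re, Complex.neg_im, him x, him y, Complex.mul_re] at this
    ring_nf at this ⊢
    linarith
  apply Complex.ext <;> simp [Complex.conj_re, Complex.conj_im] <;> linarith

/-- Cauchy–Schwarz inequality for a nonnegative sesquilinear form. -/
theorem stmt17.cauchy_schwarz
    (φ : X → X → ℂ)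
    (haddl : ∀ a a' b, φ (a + a') b = φ a b + φ a' b)
    (hsmull : ∀ (z : ℂ) a b, φ (z • a) b = starRingEnd ℂ z * φ a b)
    (hpos : ∀ c, 0 ≤ φ c c)
    (hsymm : ∀ x y, (starRingEnd ℂ) (φ y x) = φ x y) :
    ∀ x y, ‖φ x y‖ ^ 2 ≤ (φ x x).re * (φ y y).re := by
  letI core : PreInnerProductSpace.Core ℂ X :=
    { inner := φ
      conj_inner_symm := fun x y => hsymm x y
      re_inner_nonneg := fun x => by simpa using (Complex.le_def.mp (hpos x)).1
      add_left := haddl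
      smul_left := fun x y r => hsmull r x y }
  intro x y
  have h : ‖φ x y‖ * ‖φ y x‖ ≤ (φ x x).re * (φ y y).re :=
    InnerProductSpace.Core.inner_mul_inner_self_le (𝕜 := ℂ) (F := X) (c := core) x y
  have h3 : ‖φ y x‖ = ‖φ x y‖ := by rw [← hsymm x y, RCLike.norm_conj]
  rw [h3] at h
  nlinarith [norm_nonneg (φ x y)]

end Aux

/-- Let `X` be a barrelled normed space and `φ` a closed nonnegative
sesquilinear form defined everywhere on `X × X`. Then `φ` is bounded: there is `γ ≥ 0`
with `φ(c, c) ≤ γ²·‖c‖²` for all `c ∈ X`. (In the paper: the identity map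
`j : 𝔄 ⊗ₙ 𝔅 → (𝔄 ⊗ 𝔅, ‖·‖_{φ_Ω})^` is closed, hence continuous by the closed graph
theorem for maps from barrelled spaces to Pták spaces, which yields
`φ_Ω(c, c) ≤ γ²‖c‖_n̄²`.) -/
theorem stmt17
    (X : Type*) [NormedAddCommGroup X] [NormedSpace ℂ X] [BarrelledSpace ℂ X]
    (φ : X → X → ℂ)
    -- sesquilinearity
    (haddl : ∀ a a' b, φ (a + a') b = φ a b + φ a' b)
    (haddr : ∀ a b b', φ a (b + b') = φ a b + φ a b')
    (hsmull : ∀ (z : ℂ) a b, φ (z • a) b = starRingEnd ℂ z * φ a b)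
    (hsmulr : ∀ (z : ℂ) a b, φ a (z • b) = z * φ a b)
    -- nonnegativity
    (hpos : ∀ c, 0 ≤ φ c c)
    -- closedness
    (hclosed : ∀ (v : ℕ → X) (v₀ : X),
      Tendsto (fun n => ‖v n - v₀‖) atTop (nhds 0) →
      (∀ ε : ℝ, 0 < ε → ∃ M : ℕ, ∀ n ≥ M, ∀ m ≥ M,
        ‖φ (v n - v m) (v n - v m)‖ < ε) →
      Tendsto (fun n => φ (v n - v₀) (v n - v₀)) atTop (nhds 0)) :
    ∃ γ : ℝ, 0 ≤ γ ∧ ∀ c : X, (φ c c).re ≤ γ ^ 2 * ‖c‖ ^ 2 := by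
  have hsymm := stmt17.conj_symm φ haddl haddr hsmull hsmulr hpos
  have hCS := stmt17.cauchy_schwarz φ haddl hsmull hpos hsymm
  set q : X → ℝ := fun c => (φ c c).re with hq_def
  have hq0 : ∀ c, 0 ≤ q c := by
    intro c; simpa using (Complex.le_def.mp (hpos c)).1
  have him : ∀ c, (φ c c).im = 0 := by
    intro c
    have := (Complex.le_def.mp (hpos c)).2
    simpa using this.symm
  -- subtraction expansions
  have hsubl : ∀ a a' b, φ (a - a') b = φ a b - φ a' b := by
    intro a a' b
    have h := haddl (a - a') a' b
    rw [sub_add_cancel] at h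
    linear_combination -h
  have hsubr : ∀ a b b', φ a (b - b') = φ a b - φ a b' := by
    intro a b b'
    have h := haddr a (b - b') b'
    rw [sub_add_cancel] at h
    linear_combination -h
  -- parallelogram law
  have hpar : ∀ u v : X, q (u + v) + q (u - v) = 2 * q u + 2 * q v := by
    intro u v
    have e : φ (u + v) (u + v) + φ (u - v) (u - v) = 2 * φ u u + 2 * φ v v := by
      rw [haddl, haddr, haddr, hsubl, hsubr, hsubr]; ring
    have := congrArg Complex.re e
    simpa [q, Complex.add_re, Complex.mul_re, Complex.sub_re] using this
  -- real scalar multiplication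
  have hcsmul : ∀ (z : ℂ) (x : X), q (z • x) = ‖z‖ ^ 2 * q x := by
    intro z x
    have e : φ (z • x) (z • x) = (starRingEnd ℂ z * z) * φ x x := by
      rw [hsmull, hsmulr]; ring
    have hz : starRingEnd ℂ z * z = ((‖z‖ ^ 2 : ℝ) : ℂ) := by
      rw [mul_comm, Complex.mul_conj]
      norm_cast
      rw [Complex.sq_norm]
    have := congrArg Complex.re e
    rw [hz, Complex.re_ofReal_mul] at this
    simpa [q] using this
  have hrsmul : ∀ (r : ℝ) (x : X), q (r • x) = r ^ 2 * q x := by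
    intro r x
    rw [← Complex.coe_smul, hcsmul]
    simp [Complex.norm_real, sq_abs]
  -- the form seminorm
  have hCS' : ∀ x y, ‖φ x y‖ ≤ Real.sqrt (q x) * Real.sqrt (q y) := by
    intro x y
    calc ‖φ x y‖ = Real.sqrt (‖φ x y‖ ^ 2) := (Real.sqrt_sq (norm_nonneg _)).symm
      _ ≤ Real.sqrt ((φ x x).re * (φ y y).re) := Real.sqrt_le_sqrt (hCS x y)
      _ = Real.sqrt (q x) * Real.sqrt (q y) := Real.sqrt_mul (hq0 x) _
  have hqadd : ∀ x y, q (x + y) = q x + 2 * (φ x y).re + q y := by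
    intro x y
    have e : φ (x + y) (x + y) = φ x x + φ x y + φ y x + φ y y := by
      rw [haddl, haddr, haddr]; ring
    have := congrArg Complex.re e
    have hre : (φ y x).re = (φ x y).re := by
      rw [← hsymm x y]; simp
    simp only [Complex.add_re] at this
    rw [hre] at this
    simp only [q]
    linarith
  have p_add_le : ∀ x y : X, Real.sqrt (q (x + y)) ≤ Real.sqrt (q x) + Real.sqrt (q y) := by
    intro x y
    have h1 : q (x + y) ≤ (Real.sqrt (q x) + Real.sqrt (q y)) ^ 2 := by
      have h2 : (φ x y).re ≤ ‖φ x y‖ := Complex.re_le_norm _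
      have h3 := hCS' x y
      rw [hqadd]
      have := Real.sq_sqrt (hq0 x)
      have := Real.sq_sqrt (hq0 y)
      nlinarith
    calc Real.sqrt (q (x + y)) ≤ Real.sqrt ((Real.sqrt (q x) + Real.sqrt (q y)) ^ 2) :=
          Real.sqrt_le_sqrt h1
      _ = Real.sqrt (q x) + Real.sqrt (q y) := by
          rw [Real.sqrt_sq (by positivity)]
  have p_smul : ∀ (a : ℂ) (x : X), Real.sqrt (q (a • x)) = ‖a‖ * Real.sqrt (q x) := by
    intro a x
    rw [hcsmul, Real.sqrt_mul (by positivity), Real.sqrt_sq (norm_nonneg a)]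
  set p : Seminorm ℂ X := Seminorm.of (fun x => Real.sqrt (q x)) p_add_le p_smul with hp_def
  have hp : ∀ x, p x = Real.sqrt (q x) := fun _ => rfl
  have hqp : ∀ x, q x = (p x) ^ 2 := by
    intro x; rw [hp, Real.sq_sqrt (hq0 x)]
  have hnormq : ∀ d, ‖φ d d‖ = q d := by
    intro d
    have : φ d d = ((q d : ℝ) : ℂ) := by
      apply Complex.ext
      · simp [q]
      · simpa using (him d)
    rw [this, Complex.norm_real, Real.norm_of_nonneg (hq0 d)]
  -- key: sublevel sets of p are sequentially closed
  have key : ∀ t : ℝ, 0 ≤ t → ∀ (x : ℕ → X) (x₀ : X), (∀ n, p (x n) ≤ t) →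
      Tendsto x atTop (nhds x₀) → p x₀ ≤ t := by
    intro t ht x x₀ hxt hx
    set S : Set X := {c | p c ≤ t} with hS_def
    have hconv : Convex ℝ S := by
      intro u hu v hv a b ha hb hab
      have hcalc : p (a • u + b • v) ≤ a * p u + b * p v := by
        calc p (a • u + b • v) ≤ p (a • u) + p (b • v) := map_add_le_add p _ _
          _ = ‖(a : ℂ)‖ * p u + ‖(b : ℂ)‖ * p v := by
              rw [← Complex.coe_smul, ← Complex.coe_smul, map_smul_eq_mul, map_smul_eq_mul]
          _ = a * p u + b * p v := by
              rw [Complex.norm_real, Complex.norm_real, Real.norm_of_nonneg ha, Real.norm_of_nonneg hb]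
      have : a * p u + b * p v ≤ a * t + b * t := by
        have := mul_le_mul_of_nonneg_left hu ha
        have := mul_le_mul_of_nonneg_left hv hb
        dsimp [S] at *
        linarith
      simp only [S, Set.mem_setOf_eq] at *
      calc p (a • u + b • v) ≤ a * t + b * t := hcalc.trans this
        _ = t := by rw [← add_mul, hab, one_mul]
    set T : ℕ → Set X := fun m => convexHull ℝ (x '' Set.Ici m) with hT_def
    have hTS : ∀ m, T m ⊆ S := fun m =>
      convexHull_min (by rintro _ ⟨n, _, rfl⟩; exact hxt n) hconv
    have hTmono : ∀ {m k : ℕ}, m ≤ k → T k ⊆ T m := fun h =>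
      convexHull_mono (Set.image_mono (Set.Ici_subset_Ici.mpr h))
    have hTne : ∀ m, x m ∈ T m := fun m =>
      subset_convexHull _ _ ⟨m, Set.self_mem_Ici, rfl⟩
    set A : ℕ → ℝ := fun m => sInf (q '' T m) with hA_def
    have hbdd : ∀ m, BddBelow (q '' T m) := fun m =>
      ⟨0, by rintro _ ⟨u, _, rfl⟩; exact hq0 u⟩
    have hne : ∀ m, (q '' T m).Nonempty := fun m =>
      ⟨q (x m), Set.mem_image_of_mem _ (hTne m)⟩
    have hAle : ∀ m, ∀ u ∈ T m, A m ≤ q u := fun m u hu =>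
      csInf_le (hbdd m) (Set.mem_image_of_mem _ hu)
    have hqt : ∀ u ∈ S, q u ≤ t ^ 2 := by
      intro u hu
      rw [hqp]
      exact pow_le_pow_left₀ (apply_nonneg p u) hu 2
    have hAt : ∀ m, A m ≤ t ^ 2 :=
      fun m => (hAle m (x m) (hTne m)).trans (hqt _ (hTS m (hTne m)))
    have hAmono : Monotone A := fun m k h =>
      csInf_le_csInf (hbdd m) (hne k) (Set.image_mono (hTmono h))
    have hbddA : BddAbove (Set.range A) := ⟨t ^ 2, by rintro _ ⟨m, rfl⟩; exact hAt m⟩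
    set a := ⨆ m, A m with ha_def
    have hAa : ∀ m, A m ≤ a := fun m => le_ciSup hbddA m
    have hat : a ≤ t ^ 2 := ciSup_le hAt
    have hAtend : Tendsto A atTop (nhds a) := tendsto_atTop_ciSup hAmono hbddA
    have hchoice : ∀ m : ℕ, ∃ u, u ∈ T m ∧ q u < A m + 1 / (m + 1) := by
      intro m
      have hlt : sInf (q '' T m) < A m + 1 / (m + 1) := by
        have h0 : (0:ℝ) < 1 / ((m:ℝ) + 1) := by positivity
        have : sInf (q '' T m) = A m := rfl
        rw [this]
        linarith
      obtain ⟨y, hy, hylt⟩ := exists_lt_of_csInf_lt (hne m) hlt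
      obtain ⟨u, hu, rfl⟩ := hy
      exact ⟨u, hu, hylt⟩
    choose u huT huq using hchoice
    -- u m → x₀ in norm
    have hulim : Tendsto (fun m => ‖u m - x₀‖) atTop (nhds 0) := by
      rw [← tendsto_iff_norm_sub_tendsto_zero]
      rw [Metric.tendsto_atTop]
      intro ε hε
      obtain ⟨N, hN⟩ := (Metric.tendsto_atTop.mp hx) (ε / 2) (by positivity)
      refine ⟨N, fun m hm => ?_⟩
      have hsub : T N ⊆ Metric.closedBall x₀ (ε / 2) := by
        apply convexHull_min _ (convex_closedBall _ _)
        rintro _ ⟨n, hn, rfl⟩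
        exact Metric.mem_closedBall.2 (hN n hn).le
      have := hsub (hTmono hm (huT m))
      rw [Metric.mem_closedBall] at this
      linarith
    -- u is φ-Cauchy
    have hCauchy : ∀ ε : ℝ, 0 < ε → ∃ M : ℕ, ∀ n ≥ M, ∀ m ≥ M,
        ‖φ (u n - u m) (u n - u m)‖ < ε := by
      intro ε hε
      obtain ⟨M₁, hM₁⟩ := (Metric.tendsto_atTop.mp hAtend) (ε / 16) (by positivity)
      obtain ⟨M₂, hM₂⟩ := (Metric.tendsto_atTop.mp
        (tendsto_one_div_add_atTop_nhds_zero_nat (𝕜 := ℝ))) (ε / 8) (by positivity)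
      set M := max M₁ M₂ with hM_def
      refine ⟨M, fun n hn m hm => ?_⟩
      rw [hnormq]
      -- bound q (u n - u m)
      have hparnm : q (u n - u m) = 2 * q (u n) + 2 * q (u m) - q (u n + u m) := by
        have := hpar (u n) (u m)
        linarith
      have hmidmem : ((1 / 2 : ℝ) • (u n + u m)) ∈ T M := by
        rw [smul_add]
        exact (convex_convexHull ℝ _) (hTmono hn (huT n)) (hTmono hm (huT m))
          (by norm_num) (by norm_num) (by norm_num)
      have hmid4 : q (u n + u m) = 4 * q ((1 / 2 : ℝ) • (u n + u m)) := by
        rw [hrsmul]; ring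
      have h4 : A M ≤ q ((1 / 2 : ℝ) • (u n + u m)) := hAle M _ hmidmem
      have hAn : A n ≤ a := hAa n
      have hAm : A m ≤ a := hAa m
      have hqn : q (u n) < A n + 1 / (n + 1) := huq n
      have hqm : q (u m) < A m + 1 / (m + 1) := huq m
      -- numeric bounds
      have hMa : a - A M < ε / 16 := by
        have := hM₁ M (le_max_left _ _)
        rw [Real.dist_eq, abs_sub_lt_iff] at this
        linarith [this.2]
      have hfrac : ∀ k : ℕ, k ≥ M → 1 / ((k : ℝ) + 1) < ε / 8 := by
        intro k hk
        have h2 := hM₂ k (le_trans (le_max_right _ _) hk)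
        rw [Real.dist_eq] at h2
        have : (0:ℝ) ≤ 1 / ((k : ℝ) + 1) := by positivity
        rw [abs_sub_lt_iff] at h2
        simpa using h2.1
      have hfn := hfrac n hn
      have hfm := hfrac m hm
      calc q (u n - u m) = 2 * q (u n) + 2 * q (u m) - 4 * q ((1 / 2 : ℝ) • (u n + u m)) := by
            rw [hparnm, hmid4]
        _ ≤ 2 * (A n + 1 / (n + 1)) + 2 * (A m + 1 / (m + 1)) - 4 * A M := by linarith
        _ ≤ 4 * (a - A M) + 2 * (1 / (n + 1)) + 2 * (1 / (m + 1)) := by linarith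
        _ < 4 * (ε / 16) + 2 * (ε / 8) + 2 * (ε / 8) := by
            linarith
        _ ≤ ε := by linarith
    -- apply closedness
    have hfin := hclosed u x₀ hulim hCauchy
    have hqlim : Tendsto (fun m => q (u m - x₀)) atTop (nhds 0) := by
      have := (Complex.continuous_re.tendsto 0).comp hfin
      simpa [Function.comp_def, q] using this
    -- conclude
    have hple : ∀ m : ℕ, p x₀ ≤ Real.sqrt (A m + 1 / (m + 1)) + Real.sqrt (q (u m - x₀)) := by
      intro m
      have h1 : p x₀ ≤ p (u m) + p (x₀ - u m) := by
        have := map_add_le_add p (u m) (x₀ - u m)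
        simpa using this
      have h2 : p (x₀ - u m) = Real.sqrt (q (u m - x₀)) := by
        rw [map_sub_rev p, hp]
      have h3 : p (u m) ≤ Real.sqrt (A m + 1 / (m + 1)) := by
        rw [hp]
        exact Real.sqrt_le_sqrt (huq m).le
      linarith [h1, h2 ▸ h1, h3]
    have htend : Tendsto (fun m : ℕ => Real.sqrt (A m + 1 / (m + 1)) +
        Real.sqrt (q (u m - x₀))) atTop (nhds (Real.sqrt (a + 0) + Real.sqrt 0)) := by
      exact ((hAtend.add tendsto_one_div_add_atTop_nhds_zero_nat).sqrt).add hqlim.sqrt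
    have hfin2 : p x₀ ≤ Real.sqrt (a + 0) + Real.sqrt 0 :=
      ge_of_tendsto htend (Filter.Eventually.of_forall hple)
    have : Real.sqrt a ≤ t := by
      calc Real.sqrt a ≤ Real.sqrt (t ^ 2) := Real.sqrt_le_sqrt hat
        _ = t := Real.sqrt_sq ht
    simpa using hfin2.trans (by simpa using this)
  -- p is lower semicontinuous
  have hlsc : LowerSemicontinuous (fun x => p x) := by
    rw [lowerSemicontinuous_iff_isClosed_preimage]
    intro t
    rcases le_or_gt 0 t with ht | ht
    · apply IsSeqClosed.isClosed
      intro x x₀ hxS hxlim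
      exact key t ht x x₀ (fun n => hxS n) hxlim
    · convert isClosed_empty
      ext c
      simp only [Set.mem_preimage, Set.mem_Iic, Set.mem_empty_iff_false, iff_false, not_le]
      exact lt_of_lt_of_le ht (apply_nonneg p c)
  have hcont : Continuous (fun x => p x) := p.continuous_of_lowerSemicontinuous hlsc
  obtain ⟨C, hC, hbound⟩ := p.bound_of_continuous_normedSpace hcont
  refine ⟨C, hC.le, fun c => ?_⟩
  have h1 : (φ c c).re = (p c) ^ 2 := hqp c
  have h2 : (p c) ^ 2 ≤ (C * ‖c‖) ^ 2 :=
    pow_le_pow_left₀ (apply_nonneg p c) (hbound c) 2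
  rw [h1]
  calc (p c) ^ 2 ≤ (C * ‖c‖) ^ 2 := h2
    _ = C ^ 2 * ‖c‖ ^ 2 := by ring
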